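/- Let X ∈ ℝ^{d1×d2} have singular value decomposition X = U Σ Vᵀ with Σ = diag(σ_1, …, σ_r) the diagonal matrix of positive singular values, and for τ ≥ 0 define the singular value thresholding operator D_τ(X) = U · diag((σ_1 − τ)_+, …, (σ_r − τ)_+) · Vᵀ, where (x)_+ = max{x, 0}. Then for every τ ≥ 0 and every X ∈ ℝ^{d1×d2}, D_τ(X) is a minimizer over Y ∈ ℝ^{d1×d2} of (1/2)‖Y − X‖_F² + τ‖Y‖_*. -/

import Mathlib

open Real Matrix

/-- The nuclear norm of a real matrix: the sum of its singular values, i.e. the sum of the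
square roots of the eigenvalues of `Mᵀ M`. -/
noncomputable def nuclearNorm {d1 d2 : ℕ} (M : Matrix (Fin d1) (Fin d2) ℝ) : ℝ :=
  ∑ i, Real.sqrt ((show (Mᵀ * M).IsHermitian by
    simpa using Matrix.isHermitian_conjTranspose_mul_self M).eigenvalues i)

/-- Squared Frobenius norm. -/
def frobSq {d1 d2 : ℕ} (M : Matrix (Fin d1) (Fin d2) ℝ) : ℝ := ∑ i, ∑ j, (M i j) ^ 2

lemma dot_self_nonneg {n : ℕ} (x : Fin n → ℝ) : 0 ≤ x ⬝ᵥ x :=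
  Finset.sum_nonneg fun i _ => mul_self_nonneg _

/-- If `Uᵀ U = 1` then `‖Uᵀ x‖² ≤ ‖x‖²`. -/
lemma contract {d r : ℕ} (U : Matrix (Fin d) (Fin r) ℝ) (hU : Uᵀ * U = 1)
    (x : Fin d → ℝ) : (Uᵀ *ᵥ x) ⬝ᵥ (Uᵀ *ᵥ x) ≤ x ⬝ᵥ x := by
  set y := Uᵀ *ᵥ x with hy
  have h1 : x ⬝ᵥ (U *ᵥ y) = y ⬝ᵥ y := by
    rw [dotProduct_mulVec x U y, ← mulVec_transpose, ← hy]
  have h2 : (U *ᵥ y) ⬝ᵥ (U *ᵥ y) = y ⬝ᵥ y := by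
    rw [dotProduct_mulVec, ← mulVec_transpose, mulVec_mulVec, hU, one_mulVec]
  have h3 : 0 ≤ (x - U *ᵥ y) ⬝ᵥ (x - U *ᵥ y) := dot_self_nonneg _
  rw [sub_dotProduct, dotProduct_sub, dotProduct_sub, h1, h2,
    dotProduct_comm (U *ᵥ y) x, h1] at h3
  linarith

/-- If `Uᵀ U = 1` then `‖U y‖² = ‖y‖²`. -/
lemma isometry_sq {d r : ℕ} (U : Matrix (Fin d) (Fin r) ℝ) (hU : Uᵀ * U = 1)
    (y : Fin r → ℝ) : (U *ᵥ y) ⬝ᵥ (U *ᵥ y) = y ⬝ᵥ y := by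
  rw [dotProduct_mulVec, ← mulVec_transpose, mulVec_mulVec, hU, one_mulVec]

section eig
variable {d1 d2 : ℕ} (M : Matrix (Fin d1) (Fin d2) ℝ)

noncomputable def eigVec (k : Fin d2) : Fin d2 → ℝ :=
  ⇑((Matrix.isHermitian_conjTranspose_mul_self M).eigenvectorBasis k)

lemma eig_eq (k : Fin d2) :
    (Mᴴ * M) *ᵥ eigVec M k =
      (Matrix.isHermitian_conjTranspose_mul_self M).eigenvalues k • eigVec M k :=
  (Matrix.isHermitian_conjTranspose_mul_self M).mulVec_eigenvectorBasis k

lemma eig_norm (k : Fin d2) : eigVec M k ⬝ᵥ eigVec M k = 1 := by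
  have h := orthonormal_iff_ite.mp
    ((Matrix.isHermitian_conjTranspose_mul_self M).eigenvectorBasis.orthonormal) k k
  simp only [if_pos, eq_self_iff_true, if_true] at h
  rw [← h]
  simp [PiLp.inner_apply, RCLike.inner_apply, dotProduct, eigVec, mul_comm]
  rw [PiLp.inner_apply] at h
  simp only [RCLike.inner_apply, conj_trivial] at h
  exact h

lemma eig_complete (l l' : Fin d2) :
    ∑ k, eigVec M k l * eigVec M k l' = (1 : Matrix (Fin d2) (Fin d2) ℝ) l l' := by
  have h : ((Matrix.isHermitian_conjTranspose_mul_self M).eigenvectorUnitary :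
      Matrix (Fin d2) (Fin d2) ℝ) *
      star ((Matrix.isHermitian_conjTranspose_mul_self M).eigenvectorUnitary :
      Matrix (Fin d2) (Fin d2) ℝ) = 1 :=
    (Matrix.mem_unitaryGroup_iff).mp
      (Matrix.isHermitian_conjTranspose_mul_self M).eigenvectorUnitary.2
  have h2 := congrFun (congrFun h l) l'
  rw [← h2]
  simp [Matrix.mul_apply, Matrix.star_apply, eigVec]

lemma eig_val (k : Fin d2) :
    (Matrix.isHermitian_conjTranspose_mul_self M).eigenvalues k =
      (M *ᵥ eigVec M k) ⬝ᵥ (M *ᵥ eigVec M k) := by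
  have h := congrArg (fun v => eigVec M k ⬝ᵥ v) (eig_eq M k)
  simp only [dotProduct_smul, smul_eq_mul, eig_norm, mul_one] at h
  conv at h => lhs; rw [← mulVec_mulVec, conjTranspose_eq_transpose_of_trivial,
    dotProduct_mulVec, vecMul_transpose]
  exact h.symm

end eig

section eigU
variable {d1 d2 : ℕ} (M : Matrix (Fin d1) (Fin d2) ℝ)

noncomputable def eigU : Matrix (Fin d2) (Fin d2) ℝ :=
  ((Matrix.isHermitian_conjTranspose_mul_self M).eigenvectorUnitary : Matrix (Fin d2) (Fin d2) ℝ)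

lemma eigU_mul_transpose : eigU M * (eigU M)ᵀ = 1 := by
  have h := (Matrix.mem_unitaryGroup_iff).mp
    (Matrix.isHermitian_conjTranspose_mul_self M).eigenvectorUnitary.2
  rw [Matrix.star_eq_conjTranspose] at h
  rw [eigU, ← conjTranspose_eq_transpose_of_trivial]
  exact h

lemma mul_eigU_apply {s : ℕ} (Z : Matrix (Fin s) (Fin d2) ℝ) (i : Fin s) (k : Fin d2) :
    (Z * eigU M) i k = (Z *ᵥ eigVec M k) i := by
  simp [Matrix.mul_apply, mulVec, dotProduct, eigU, eigVec]

lemma transpose_eigU_mul_apply {s : ℕ} (Z : Matrix (Fin d2) (Fin s) ℝ) (k : Fin d2) (i : Fin s) :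
    ((eigU M)ᵀ * Z) k i = (Zᵀ *ᵥ eigVec M k) i := by
  simp [Matrix.mul_apply, mulVec, dotProduct, eigU, eigVec, transpose_apply, mul_comm]

lemma dot_sq {n : ℕ} (x : Fin n → ℝ) : x ⬝ᵥ x = ∑ i, x i ^ 2 := by
  simp [dotProduct, sq]

end eigU

lemma sum_entry_mul_eq_trace {a b : ℕ} (A B : Matrix (Fin a) (Fin b) ℝ) :
    ∑ j, ∑ l, A j l * B j l = Matrix.trace (Aᵀ * B) := by
  rw [Matrix.trace]
  simp only [Matrix.diag, Matrix.mul_apply, Matrix.transpose_apply]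
  rw [Finset.sum_comm]

lemma trace_diagonal_mul {n : ℕ} (d : Fin n → ℝ) (Z : Matrix (Fin n) (Fin n) ℝ) :
    Matrix.trace (Matrix.diagonal d * Z) = ∑ i, d i * Z i i := by
  simp [Matrix.trace, Matrix.diag, Matrix.diagonal_mul]

lemma dual_bound {d1 d2 r : ℕ} (U : Matrix (Fin d1) (Fin r) ℝ) (V : Matrix (Fin d2) (Fin r) ℝ)
    (hU : Uᵀ * U = 1) (hV : Vᵀ * V = 1) (m : Fin r → ℝ) (τ : ℝ) (hτ : 0 ≤ τ)
    (hm0 : ∀ i, 0 ≤ m i) (hmτ : ∀ i, m i ≤ τ) (Y : Matrix (Fin d1) (Fin d2) ℝ) :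
    ∑ j, ∑ l, (U * Matrix.diagonal m * Vᵀ) j l * Y j l ≤ τ * nuclearNorm Y := by
  classical
  set w := eigVec Y with hw
  set μ := (Matrix.isHermitian_conjTranspose_mul_self Y).eigenvalues with hμdef
  have step1 : ∑ j, ∑ l, (U * Matrix.diagonal m * Vᵀ) j l * Y j l
      = ∑ i, m i * (Uᵀ * Y * V) i i := by
    rw [sum_entry_mul_eq_trace]
    have ht : (U * Matrix.diagonal m * Vᵀ)ᵀ = V * (Matrix.diagonal m * Uᵀ) := by
      rw [Matrix.transpose_mul, Matrix.transpose_mul, Matrix.transpose_transpose,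
        Matrix.diagonal_transpose]
    rw [ht, show V * (Matrix.diagonal m * Uᵀ) * Y = V * (Matrix.diagonal m * (Uᵀ * Y)) by
      simp [Matrix.mul_assoc], Matrix.trace_mul_comm,
      show Matrix.diagonal m * (Uᵀ * Y) * V = Matrix.diagonal m * (Uᵀ * Y * V) by
      simp [Matrix.mul_assoc], trace_diagonal_mul]
  have step2 : ∀ i, (Uᵀ * Y * V) i i
      = ∑ k, ((Uᵀ * Y) *ᵥ w k) i * (Vᵀ *ᵥ w k) i := by
    intro i
    have hsplit : Uᵀ * Y * V = (Uᵀ * Y * eigU Y) * ((eigU Y)ᵀ * V) := by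
      rw [show (Uᵀ * Y * eigU Y) * ((eigU Y)ᵀ * V)
          = Uᵀ * Y * (eigU Y * (eigU Y)ᵀ) * V by simp [Matrix.mul_assoc],
        eigU_mul_transpose, Matrix.mul_one]
    rw [hsplit, Matrix.mul_apply]
    exact Finset.sum_congr rfl fun k _ => by
      rw [mul_eigU_apply, transpose_eigU_mul_apply]
  have perk : ∀ k, ∑ i, m i * (((Uᵀ * Y) *ᵥ w k) i * ((Vᵀ *ᵥ w k) i)) ≤ τ * Real.sqrt (μ k) := by
    intro k
    set a := (Uᵀ * Y) *ᵥ w k with hadef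
    set b := Vᵀ *ᵥ w k with hbdef
    have ha : ∑ i, a i ^ 2 ≤ μ k := by
      have h1 := contract U hU (Y *ᵥ w k)
      rw [mulVec_mulVec, dot_sq, dot_sq] at h1
      calc ∑ i, a i ^ 2 ≤ ∑ j, (Y *ᵥ w k) j ^ 2 := h1
        _ = μ k := by rw [hμdef, eig_val Y k, dot_sq]
    have hb : ∑ i, b i ^ 2 ≤ 1 := by
      have h1 := contract V hV (w k)
      rw [dot_sq] at h1
      calc ∑ i, b i ^ 2 ≤ w k ⬝ᵥ w k := h1
        _ = 1 := eig_norm Y k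
    have hμ0 : 0 ≤ μ k := by
      rw [hμdef, eig_val Y k]; exact dot_self_nonneg _
    have ha0 : 0 ≤ ∑ i, a i ^ 2 := Finset.sum_nonneg fun i _ => sq_nonneg _
    have hb0 : 0 ≤ ∑ i, b i ^ 2 := Finset.sum_nonneg fun i _ => sq_nonneg _
    have hcs : ∑ i, |a i| * |b i|
        ≤ Real.sqrt (∑ i, a i ^ 2) * Real.sqrt (∑ i, b i ^ 2) := by
      have h := Finset.sum_mul_sq_le_sq_mul_sq Finset.univ (fun i => |a i|) (fun i => |b i|)
      simp only [sq_abs] at h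
      have h0 : 0 ≤ ∑ i, |a i| * |b i| :=
        Finset.sum_nonneg fun i _ => mul_nonneg (abs_nonneg _) (abs_nonneg _)
      calc ∑ i, |a i| * |b i| = Real.sqrt ((∑ i, |a i| * |b i|) ^ 2) := (Real.sqrt_sq h0).symm
        _ ≤ Real.sqrt ((∑ i, a i ^ 2) * ∑ i, b i ^ 2) := Real.sqrt_le_sqrt h
        _ = Real.sqrt (∑ i, a i ^ 2) * Real.sqrt (∑ i, b i ^ 2) := Real.sqrt_mul ha0 _
    calc ∑ i, m i * (a i * b i) ≤ ∑ i, τ * (|a i| * |b i|) := by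
          refine Finset.sum_le_sum fun i _ => ?_
          have h1 : a i * b i ≤ |a i| * |b i| := by rw [← abs_mul]; exact le_abs_self _
          have h2 : m i * (a i * b i) ≤ m i * (|a i| * |b i|) :=
            mul_le_mul_of_nonneg_left h1 (hm0 i)
          exact h2.trans (mul_le_mul_of_nonneg_right (hmτ i)
            (mul_nonneg (abs_nonneg _) (abs_nonneg _)))
      _ = τ * ∑ i, |a i| * |b i| := (Finset.mul_sum _ _ _).symm
      _ ≤ τ * (Real.sqrt (∑ i, a i ^ 2) * Real.sqrt (∑ i, b i ^ 2)) :=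
          mul_le_mul_of_nonneg_left hcs hτ
      _ ≤ τ * (Real.sqrt (μ k) * 1) := by
          refine mul_le_mul_of_nonneg_left (mul_le_mul (Real.sqrt_le_sqrt ha) ?_
            (Real.sqrt_nonneg _) (Real.sqrt_nonneg _)) hτ
          rw [show (1 : ℝ) = Real.sqrt 1 by simp]
          exact Real.sqrt_le_sqrt hb
      _ = τ * Real.sqrt (μ k) := by ring
  rw [step1]
  simp_rw [step2, Finset.mul_sum]
  rw [Finset.sum_comm]
  calc ∑ k, ∑ i, m i * (((Uᵀ * Y) *ᵥ w k) i * (Vᵀ *ᵥ w k) i)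
      ≤ ∑ k, τ * Real.sqrt (μ k) := Finset.sum_le_sum fun k _ => perk k
    _ = τ * nuclearNorm Y := by rw [nuclearNorm, ← Finset.mul_sum]; rfl

lemma nn_le {d1 d2 r : ℕ} (U : Matrix (Fin d1) (Fin r) ℝ) (V : Matrix (Fin d2) (Fin r) ℝ)
    (hU : Uᵀ * U = 1) (hV : Vᵀ * V = 1) (p : Fin r → ℝ) (hp : ∀ i, 0 ≤ p i) :
    nuclearNorm (U * Matrix.diagonal p * Vᵀ) ≤ ∑ i, p i := by
  classical
  set D := U * Matrix.diagonal p * Vᵀ with hD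
  set w := eigVec D with hw
  set μ := (Matrix.isHermitian_conjTranspose_mul_self D).eigenvalues with hμdef
  set c := fun k => Vᵀ *ᵥ w k with hc
  have fact1 : ∀ k, μ k = ∑ i, p i ^ 2 * c k i ^ 2 := by
    intro k
    rw [hμdef, eig_val D k]
    have hDw : D *ᵥ w k = U *ᵥ (Matrix.diagonal p *ᵥ (Vᵀ *ᵥ w k)) := by
      rw [hD, mulVec_mulVec, mulVec_mulVec]
    rw [hDw, isometry_sq U hU, dot_sq]
    exact Finset.sum_congr rfl fun i _ => by
      rw [Matrix.mulVec_diagonal, mul_pow]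
  have hμ0 : ∀ k, 0 ≤ μ k := fun k => by
    rw [hμdef, eig_val D k]; exact dot_self_nonneg _
  have hVN : Vᵀ * (Dᴴ * D) = Matrix.diagonal (fun i => p i ^ 2) * Vᵀ := by
    have hDt : Dᴴ = V * (Matrix.diagonal p * Uᵀ) := by
      rw [conjTranspose_eq_transpose_of_trivial, hD, Matrix.transpose_mul,
        Matrix.transpose_mul, Matrix.transpose_transpose, Matrix.diagonal_transpose]
    rw [hDt, hD]
    simp only [← Matrix.mul_assoc]
    rw [hV, Matrix.one_mul, Matrix.mul_assoc (Matrix.diagonal p) Uᵀ U, hU, Matrix.mul_one,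
      Matrix.diagonal_mul_diagonal]
    have hpp : (fun i => p i * p i) = fun i => p i ^ 2 := funext fun i => (sq (p i)).symm
    rw [hpp]
  have fact2 : ∀ k i, p i ^ 2 * c k i = μ k * c k i := by
    intro k i
    have h := congrArg (fun v => Vᵀ *ᵥ v) (eig_eq D k)
    simp only [Matrix.mulVec_smul, mulVec_mulVec] at h
    rw [hVN] at h
    rw [← mulVec_mulVec] at h
    have h2 := congrFun h i
    simpa [Matrix.mulVec_diagonal, hc, hμdef, hw] using h2
  have fact3 : ∀ k, Real.sqrt (μ k) ≤ ∑ i, p i * c k i ^ 2 := by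
    intro k
    rcases eq_or_lt_of_le (hμ0 k) with h0 | hpos
    · rw [← h0, Real.sqrt_zero]
      exact Finset.sum_nonneg fun i _ => mul_nonneg (hp i) (sq_nonneg _)
    · have hpt : ∀ i, p i * c k i ^ 2 = Real.sqrt (μ k) * c k i ^ 2 := by
        intro i
        have h2 : p i ^ 2 * c k i ^ 2 = μ k * c k i ^ 2 := by
          linear_combination (c k i) * fact2 k i
        have hl : 0 ≤ p i * c k i ^ 2 := mul_nonneg (hp i) (sq_nonneg _)
        have hr : 0 ≤ Real.sqrt (μ k) * c k i ^ 2 :=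
          mul_nonneg (Real.sqrt_nonneg _) (sq_nonneg _)
        rw [← Real.sqrt_sq hl, ← Real.sqrt_sq hr]
        congr 1
        rw [mul_pow, mul_pow, Real.sq_sqrt (hμ0 k)]
        nlinarith [h2]
      have hsum : ∑ i, c k i ^ 2 = 1 := by
        have h1 : μ k * ∑ i, c k i ^ 2 = μ k * 1 := by
          rw [Finset.mul_sum, mul_one]
          calc ∑ i, μ k * c k i ^ 2 = ∑ i, p i ^ 2 * c k i ^ 2 :=
                Finset.sum_congr rfl fun i _ => by
                  linear_combination (-(c k i)) * fact2 k i
            _ = μ k := (fact1 k).symm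
        exact mul_left_cancel₀ hpos.ne' h1
      refine le_of_eq ?_
      calc Real.sqrt (μ k) = Real.sqrt (μ k) * ∑ i, c k i ^ 2 := by rw [hsum, mul_one]
        _ = ∑ i, Real.sqrt (μ k) * c k i ^ 2 := Finset.mul_sum _ _ _
        _ = ∑ i, p i * c k i ^ 2 := Finset.sum_congr rfl fun i _ => (hpt i).symm
  have hcsum : ∀ i, ∑ k, c k i ^ 2 = 1 := by
    intro i
    have hCC : (Vᵀ * eigU D) * (Vᵀ * eigU D)ᵀ = 1 := by
      rw [Matrix.transpose_mul, Matrix.transpose_transpose,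
        show Vᵀ * eigU D * ((eigU D)ᵀ * V) = Vᵀ * (eigU D * (eigU D)ᵀ) * V by
          simp [Matrix.mul_assoc],
        eigU_mul_transpose, Matrix.mul_one, hV]
    calc ∑ k, c k i ^ 2 = ((Vᵀ * eigU D) * (Vᵀ * eigU D)ᵀ) i i := by
          rw [Matrix.mul_apply]
          exact Finset.sum_congr rfl fun k _ => by
            rw [Matrix.transpose_apply, mul_eigU_apply, sq, hc]
      _ = 1 := by rw [hCC, Matrix.one_apply_eq]
  calc nuclearNorm D = ∑ k, Real.sqrt (μ k) := rfl
    _ ≤ ∑ k, ∑ i, p i * c k i ^ 2 := Finset.sum_le_sum fun k _ => fact3 k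
    _ = ∑ i, ∑ k, p i * c k i ^ 2 := Finset.sum_comm
    _ = ∑ i, p i := Finset.sum_congr rfl fun i _ => by
        rw [← Finset.mul_sum, hcsum i, mul_one]

lemma inner_UdV {d1 d2 r : ℕ} (U : Matrix (Fin d1) (Fin r) ℝ) (V : Matrix (Fin d2) (Fin r) ℝ)
    (hU : Uᵀ * U = 1) (hV : Vᵀ * V = 1) (a b : Fin r → ℝ) :
    ∑ j, ∑ l, (U * Matrix.diagonal a * Vᵀ) j l * (U * Matrix.diagonal b * Vᵀ) j l
      = ∑ i, a i * b i := by
  rw [sum_entry_mul_eq_trace]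
  have ht : (U * Matrix.diagonal a * Vᵀ)ᵀ * (U * Matrix.diagonal b * Vᵀ)
      = V * (Matrix.diagonal (fun i => a i * b i) * Vᵀ) := by
    rw [Matrix.transpose_mul, Matrix.transpose_mul, Matrix.transpose_transpose,
      Matrix.diagonal_transpose]
    simp only [← Matrix.mul_assoc]
    rw [Matrix.mul_assoc (V * Matrix.diagonal a) Uᵀ U, hU, Matrix.mul_one,
      Matrix.mul_assoc V (Matrix.diagonal a) (Matrix.diagonal b),
      Matrix.diagonal_mul_diagonal, Matrix.mul_assoc]
  rw [ht, Matrix.trace_mul_comm, Matrix.mul_assoc, hV, Matrix.mul_one, Matrix.trace_diagonal]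

lemma frobSq_add {d1 d2 : ℕ} (A B : Matrix (Fin d1) (Fin d2) ℝ) :
    frobSq (A + B) = frobSq A + 2 * (∑ j, ∑ l, A j l * B j l) + frobSq B := by
  simp only [frobSq, Matrix.add_apply]
  have h : ∀ j l, (A j l + B j l) ^ 2 = A j l ^ 2 + 2 * (A j l * B j l) + B j l ^ 2 := by
    intros; ring
  simp_rw [h, Finset.sum_add_distrib, ← Finset.mul_sum]

lemma frobSq_nonneg {d1 d2 : ℕ} (A : Matrix (Fin d1) (Fin d2) ℝ) : 0 ≤ frobSq A :=
  Finset.sum_nonneg fun _ _ => Finset.sum_nonneg fun _ _ => sq_nonneg _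

/-- Singular value thresholding solves the nuclear-norm-regularized least-squares problem
(Theorem 2.1 of Cai–Candès–Shen): if `X = U Σ Vᵀ` is an SVD of `X` with positive singular
values `σ`, then for every `τ ≥ 0`, `D_τ(X) = U diag((σ_i − τ)_+) Vᵀ` minimizes
`Y ↦ (1/2)‖Y − X‖_F² + τ‖Y‖_*`. -/
theorem singular_value_thresholding (d1 d2 r : ℕ) (X : Matrix (Fin d1) (Fin d2) ℝ)
    (U : Matrix (Fin d1) (Fin r) ℝ) (V : Matrix (Fin d2) (Fin r) ℝ) (σ : Fin r → ℝ)
    (hU : Uᵀ * U = 1) (hV : Vᵀ * V = 1) (hσ : ∀ i, 0 < σ i)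
    (hX : X = U * Matrix.diagonal σ * Vᵀ) (τ : ℝ) (hτ : 0 ≤ τ) :
    ∀ Y : Matrix (Fin d1) (Fin d2) ℝ,
      1 / 2 * frobSq (U * Matrix.diagonal (fun i => max (σ i - τ) 0) * Vᵀ - X)
          + τ * nuclearNorm (U * Matrix.diagonal (fun i => max (σ i - τ) 0) * Vᵀ) ≤
        1 / 2 * frobSq (Y - X) + τ * nuclearNorm Y := by
  intro Y
  set p : Fin r → ℝ := fun i => max (σ i - τ) 0 with hpdef
  set m : Fin r → ℝ := fun i => σ i - p i with hmdef
  have hp0 : ∀ i, 0 ≤ p i := fun i => le_max_right _ _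
  have hm0 : ∀ i, 0 ≤ m i := by
    intro i
    have : p i ≤ σ i := max_le (by linarith [hσ i]) (le_of_lt (hσ i))
    simp only [hmdef]; linarith
  have hmτ : ∀ i, m i ≤ τ := by
    intro i
    have : σ i - τ ≤ p i := le_max_left _ _
    simp only [hmdef]; linarith
  have hmp : ∀ i, m i * p i = τ * p i := by
    intro i
    rcases le_or_gt (σ i - τ) 0 with h | h
    · have : p i = 0 := max_eq_right h
      rw [this, mul_zero, mul_zero]
    · have hpi : p i = σ i - τ := max_eq_left h.le
      have hmi : m i = τ := by simp only [hmdef]; rw [hpi]; ring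
      rw [hmi]
  set D := U * Matrix.diagonal p * Vᵀ with hD
  set G := U * Matrix.diagonal m * Vᵀ with hG
  have hXD : X - D = G := by
    rw [hX, hD, hG, ← Matrix.sub_mul, ← Matrix.mul_sub, ← Matrix.diagonal_sub]
  have hDX : D - X = -G := by rw [← hXD, neg_sub]
  -- frobSq (D − X) = ∑ m i * m i
  have h1 : frobSq (D - X) = ∑ i, m i * m i := by
    have : frobSq (D - X) = ∑ j, ∑ l, G j l * G j l := by
      rw [hDX]
      simp [frobSq, sq]
    rw [this, inner_UdV U V hU hV m m]
  -- expansion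
  have h2 : frobSq (Y - X)
      = frobSq (Y - D) + 2 * (∑ j, ∑ l, (Y - D) j l * (D - X) j l) + frobSq (D - X) := by
    have h := frobSq_add (Y - D) (D - X)
    rw [sub_add_sub_cancel] at h
    exact h
  -- cross term
  have h3 : ∑ j, ∑ l, (Y - D) j l * (D - X) j l
      = -(∑ j, ∑ l, G j l * Y j l) + τ * ∑ i, p i := by
    have hpoint : ∀ j l, (Y - D) j l * (D - X) j l = -(G j l * Y j l) + D j l * G j l := by
      intro j l
      rw [hDX]
      simp only [Matrix.sub_apply, Matrix.neg_apply]
      ring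
    simp_rw [hpoint, Finset.sum_add_distrib, Finset.sum_neg_distrib]
    congr 1
    have h4 : ∑ j, ∑ l, D j l * G j l = ∑ i, p i * m i := inner_UdV U V hU hV p m
    rw [h4, Finset.mul_sum]
    exact Finset.sum_congr rfl fun i _ => by rw [mul_comm (p i) (m i), hmp i, mul_comm]
  have hE : ∑ j, ∑ l, G j l * Y j l ≤ τ * nuclearNorm Y :=
    dual_bound U V hU hV m τ hτ hm0 hmτ Y
  have hnnD : nuclearNorm D ≤ ∑ i, p i := nn_le U V hU hV p hp0
  have hnnD' : τ * nuclearNorm D ≤ τ * ∑ i, p i := mul_le_mul_of_nonneg_left hnnD hτ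
  have hfr : 0 ≤ frobSq (Y - D) := frobSq_nonneg _
  rw [h2, h3]
  linarith
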